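/- Let P and P' be non-crossing partitions of [n] with Z-decorations x = (x_1,...,x_n) and x' = (x'_1,...,x'_n) taking values in closed arcs [a_i, a_{i+1}] of a cyclically ordered set. Define min{x,x'} componentwise (taking minimum within [a_i, a_{i+1}]). Then min{x,x'} is a valid decoration of the meet P ∧ P': i.e., if i is a singleton of P ∧ P' then min{x_i,x'_i} may equal a_i, if i is an adjacency of P ∧ P' then min{x_i,x'_i} may equal a_{i+1}, and otherwise min{x_i,x'_i} lies strictly between a_i and a_{i+1}. -/
import Mathlib


/-- No two distinct blocks of `R` cross. -/
def NonCrossing (m : ℕ) (R : Finset (Finset (Fin m))) : Prop :=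
  ∀ B ∈ R, ∀ B' ∈ R, B ≠ B' →
    ∀ i ∈ B, ∀ j ∈ B, ∀ k ∈ B', ∀ l ∈ B', ¬(i < k ∧ k < j ∧ j < l)

/-- `R` is a non-crossing partition of `Fin m`. -/
def IsNCPartition (m : ℕ) (R : Finset (Finset (Fin m))) : Prop :=
  (∀ B ∈ R, B.Nonempty) ∧
  (∀ B ∈ R, ∀ B' ∈ R, B ≠ B' → Disjoint B B') ∧
  (∀ i : Fin m, ∃ B ∈ R, i ∈ B) ∧
  NonCrossing m R

/-- Refinement order. -/
def refines (m : ℕ) (P Q : Finset (Finset (Fin m))) : Prop :=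
  ∀ B ∈ P, ∃ B' ∈ Q, B ⊆ B'

/-- `{i}` is a block of `Q`. -/
def IsSingletonOf {n : ℕ} (Q : Finset (Finset (Fin n))) (i : Fin n) : Prop :=
  ({i} : Finset (Fin n)) ∈ Q

/-- `i` and `i + 1` (cyclically) lie in a common block of `Q`. -/
def IsAdjacencyOf {n : ℕ} [NeZero n] (Q : Finset (Finset (Fin n))) (i : Fin n) : Prop :=
  ∃ B ∈ Q, i ∈ B ∧ i + 1 ∈ B

/-- The common refinement of `P` and `Q`. -/
def ncMeet (n : ℕ) (P Q : Finset (Finset (Fin n))) : Finset (Finset (Fin n)) :=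
  ((P ×ˢ Q).image fun p => p.1 ∩ p.2).filter fun B => B.Nonempty

/-- `x` is a valid decoration of the non-crossing partition `P` of `[n]`:
each `x i` lies in the closed arc `[a_i, a_{i+1}]` (modelled by the interval
`[l i, r i]` in a linear order), with `x i = a_i` allowed only when `{i}` is a
singleton block and `x i = a_{i+1}` allowed only when `i` is an adjacency. -/
def IsDecoration {n : ℕ} [NeZero n] {α : Type*} [LinearOrder α]
    (l r : Fin n → α) (P : Finset (Finset (Fin n))) (x : Fin n → α) : Prop :=
  ∀ i : Fin n, x i ∈ Set.Icc (l i) (r i) ∧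
    (x i = l i → IsSingletonOf P i) ∧
    (x i = r i → IsAdjacencyOf P i)

/-- If `x` is a decoration of the non-crossing partition `P` and `x'` is a
decoration of `P'`, then the componentwise minimum `min{x, x'}` (taken within each
closed arc `[a_i, a_{i+1}]`) is a valid decoration of the meet `P ∧ P'`. -/
theorem min_decoration_of_meet (n : ℕ) [NeZero n] {α : Type*} [LinearOrder α]
    (l r : Fin n → α) (hlr : ∀ i, l i < r i)
    (P P' : Finset (Finset (Fin n))) (hP : IsNCPartition n P) (hP' : IsNCPartition n P')
    (x x' : Fin n → α) (hx : IsDecoration l r P x) (hx' : IsDecoration l r P' x') :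
    IsDecoration l r (ncMeet n P P') (fun i => min (x i) (x' i)) := by
  intro i
  obtain ⟨⟨hl, hr⟩, hsing, hadj⟩ := hx i
  obtain ⟨⟨hl', hr'⟩, hsing', hadj'⟩ := hx' i
  refine ⟨⟨le_min hl hl', min_le_of_left_le hr⟩, ?_, ?_⟩
  · intro hmin
    -- min = l i means x i = l i or x' i = l i
    rcases min_cases (x i) (x' i) with ⟨heq, _⟩ | ⟨heq, _⟩
    · have hs : ({i} : Finset (Fin n)) ∈ P := hsing (by rw [← heq]; exact hmin)
      obtain ⟨B', hB', hiB'⟩ := hP'.2.2.1 i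
      refine Finset.mem_filter.mpr ⟨Finset.mem_image.mpr ⟨(⟨{i}, B'⟩ : _), Finset.mem_product.mpr ⟨hs, hB'⟩, ?_⟩, ⟨i, Finset.mem_singleton_self i⟩⟩
      ext j
      simp only [Finset.mem_inter, Finset.mem_singleton]
      exact ⟨fun h => h.1, fun h => ⟨h, h ▸ hiB'⟩⟩
    · have hs : ({i} : Finset (Fin n)) ∈ P' := hsing' (by rw [← heq]; exact hmin)
      obtain ⟨B, hB, hiB⟩ := hP.2.2.1 i
      refine Finset.mem_filter.mpr ⟨Finset.mem_image.mpr ⟨(⟨B, {i}⟩ : _), Finset.mem_product.mpr ⟨hB, hs⟩, ?_⟩, ?_⟩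
      · ext j
        simp only [Finset.mem_inter, Finset.mem_singleton]
        exact ⟨fun h => h.2, fun h => ⟨h ▸ hiB, h⟩⟩
      · exact ⟨i, Finset.mem_singleton_self i⟩
  · intro hmin
    have h1 : x i = r i := le_antisymm hr (hmin ▸ min_le_left _ _)
    have h2 : x' i = r i := le_antisymm hr' (hmin ▸ min_le_right _ _)
    obtain ⟨B, hB, hiB, hi1B⟩ := hadj h1
    obtain ⟨B', hB', hiB', hi1B'⟩ := hadj' h2
    refine ⟨B ∩ B', Finset.mem_filter.mpr ⟨Finset.mem_image.mpr ⟨(⟨B, B'⟩ : _), Finset.mem_product.mpr ⟨hB, hB'⟩, rfl⟩, ⟨i, Finset.mem_inter.mpr ⟨hiB, hiB'⟩⟩⟩, Finset.mem_inter.mpr ⟨hiB, hiB'⟩, Finset.mem_inter.mpr ⟨hi1B, hi1B'⟩⟩
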